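/- Let Σ = S_{0:k} H_{0:k} S_{0:k}^⊤ + A_k with H_{0:k} and A_k positive definite. Then, with U := H_{0:k}^{1/2}S_{0:k}^⊤Σ^{−1}S_{0:k}H_{0:k}^{1/2} − I and V := H_{0:k}^{1/2}S_{0:k}^⊤Σ^{−1}S_{k:∞}H_{k:∞}^{1/2}, the Woodbury identity yields U² + VV^⊤ = H_{0:k}^{−1/2}(H_{0:k}^{−1} + S_{0:k}^⊤ A_k^{−1} S_{0:k})^{−1} H_{0:k}^{−1/2}. -/

import Mathlib

open Matrix

/-- The positive semidefinite square root of a positive semidefinite matrix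
(Mathlib's definition of December 2024, removed since). -/
noncomputable def Matrix.PosSemidef.sqrt {n 𝕜 : Type*} [Fintype n] [RCLike 𝕜] [PartialOrder 𝕜]
    [DecidableEq n] {A : Matrix n n 𝕜} (hA : A.PosSemidef) : Matrix n n 𝕜 :=
  hA.1.eigenvectorUnitary.1 * diagonal ((↑) ∘ (√·) ∘ hA.1.eigenvalues) *
    (star hA.1.eigenvectorUnitary : Matrix n n 𝕜)

theorem sqrtR_mul_self {n : Type*} [Fintype n] [DecidableEq n] {A : Matrix n n ℝ}
    (hA : A.PosSemidef) : hA.sqrt * hA.sqrt = A := by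
  have hU : (star hA.1.eigenvectorUnitary : Matrix n n ℝ) * hA.1.eigenvectorUnitary.1 = 1 :=
    Unitary.star_mul_self_of_mem hA.1.eigenvectorUnitary.2
  unfold Matrix.PosSemidef.sqrt
  simp only [Matrix.mul_assoc]
  rw [← Matrix.mul_assoc (star _ : Matrix n n ℝ) _, hU, Matrix.one_mul,
    ← Matrix.mul_assoc (diagonal _), diagonal_mul_diagonal]
  conv_rhs => rw [hA.1.spectral_theorem, Unitary.conjStarAlgAut_apply]
  rw [Matrix.mul_assoc]
  congr 3
  funext i
  simp [Real.mul_self_sqrt (hA.eigenvalues_nonneg i)]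

theorem sqrtR_transpose {n : Type*} [Fintype n] [DecidableEq n] {A : Matrix n n ℝ}
    (hA : A.PosSemidef) : (hA.sqrt)ᵀ = hA.sqrt := by
  unfold Matrix.PosSemidef.sqrt
  simp [Matrix.transpose_mul, Matrix.star_eq_conjTranspose, Matrix.conjTranspose_eq_transpose_of_trivial, Matrix.mul_assoc]

set_option maxHeartbeats 1000000 in
/-- Head-block identity via the Woodbury formula. -/
theorem stmt15 (Mdim k₁ k₂ : ℕ)
    (H₀ : Matrix (Fin k₁) (Fin k₁) ℝ) (hH₀ : H₀.PosDef)
    (H₁ : Matrix (Fin k₂) (Fin k₂) ℝ) (hH₁ : H₁.PosSemidef)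
    (S₀ : Matrix (Fin Mdim) (Fin k₁) ℝ) (S₁ : Matrix (Fin Mdim) (Fin k₂) ℝ)
    (hA : (S₁ * H₁ * S₁ᵀ).PosDef) :
    let A := S₁ * H₁ * S₁ᵀ
    let Sig := S₀ * H₀ * S₀ᵀ + A
    let R := hH₀.posSemidef.sqrt
    let U := R * S₀ᵀ * Sig⁻¹ * S₀ * R - 1
    let V := R * S₀ᵀ * Sig⁻¹ * S₁ * hH₁.sqrt
    U * U + V * Vᵀ = R⁻¹ * (H₀⁻¹ + S₀ᵀ * A⁻¹ * S₀)⁻¹ * R⁻¹ := by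
  intro A Sig R U V
  set Q := hH₁.sqrt with hQ
  have hRR : R * R = H₀ := sqrtR_mul_self hH₀.posSemidef
  have hRT : Rᵀ = R := by
    exact sqrtR_transpose _
  have hQQ : Q * Q = H₁ := sqrtR_mul_self hH₁
  have hQT : Qᵀ = Q := by
    exact sqrtR_transpose _
  have hApd : A.PosDef := hA
  have hSHS : (S₀ * H₀ * S₀ᵀ).PosSemidef := by
    have := hH₀.posSemidef.mul_mul_conjTranspose_same S₀
    simpa [Matrix.conjTranspose_eq_transpose_of_trivial, Matrix.mul_assoc] using this
  have hSig : Sig.PosDef := Matrix.PosDef.posSemidef_add hSHS hApd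
  have hSigT : Sigᵀ = Sig := by
    have := hSig.isHermitian
    simpa [Matrix.IsHermitian, conjTranspose_eq_transpose_of_trivial] using this
  have hRunit : IsUnit R := by
    have hdet : IsUnit R.det := by
      have h2 := hH₀.det_pos
      rw [← hRR, det_mul] at h2
      exact (by nlinarith : R.det ≠ 0).isUnit
    exact (Matrix.isUnit_iff_isUnit_det _).2 hdet
  haveI : Invertible R := hRunit.invertible
  haveI : Invertible Sig := hSig.isUnit.invertible
  haveI : Invertible A := hApd.isUnit.invertible
  haveI : Invertible H₀ := hH₀.isUnit.invertible
  have hSigInvT : (Sig⁻¹)ᵀ = Sig⁻¹ := by rw [transpose_nonsing_inv, hSigT]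
  have eSH : ∀ X : Matrix (Fin Mdim) (Fin k₁) ℝ,
      S₀ * (H₀ * (S₀ᵀ * X)) = Sig * X - A * X := by
    intro X
    have h : Sig * X = S₀ * H₀ * S₀ᵀ * X + A * X := by rw [Matrix.add_mul]
    rw [h, Matrix.mul_assoc, Matrix.mul_assoc]; abel
  have eA : ∀ X : Matrix (Fin Mdim) (Fin k₁) ℝ,
      A * X = Sig * X - S₀ * (H₀ * (S₀ᵀ * X)) := by
    intro X; rw [eSH]; abel
  have eS1 : ∀ X : Matrix (Fin Mdim) (Fin k₁) ℝ,
      S₁ * (Q * (Q * (S₁ᵀ * X))) = Sig * X - S₀ * (H₀ * (S₀ᵀ * X)) := by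
    intro X
    have h1 : S₁ * (Q * (Q * (S₁ᵀ * X))) = S₁ * H₁ * S₁ᵀ * X := by
      rw [← hQQ]; simp [Matrix.mul_assoc]
    have h2 : Sig * X = S₀ * H₀ * S₀ᵀ * X + S₁ * H₁ * S₁ᵀ * X := by rw [Matrix.add_mul]
    rw [h1, h2]; simp [Matrix.mul_assoc]
  have key : (H₀⁻¹ + S₀ᵀ * A⁻¹ * S₀) * (H₀ - H₀ * S₀ᵀ * Sig⁻¹ * S₀ * H₀) = 1 := by
    simp only [Matrix.add_mul, Matrix.mul_sub, Matrix.mul_assoc,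
      Matrix.inv_mul_cancel_left_of_invertible, Matrix.inv_mul_of_invertible]
    rw [eSH (Sig⁻¹ * (S₀ * H₀))]
    simp only [Matrix.mul_sub, Matrix.mul_inv_cancel_left_of_invertible,
      Matrix.inv_mul_cancel_left_of_invertible]
    abel
  have hBinv : (H₀⁻¹ + S₀ᵀ * A⁻¹ * S₀)⁻¹ = H₀ - H₀ * S₀ᵀ * Sig⁻¹ * S₀ * H₀ :=
    inv_eq_right_inv key
  have hRdet : IsUnit R.det := (Matrix.isUnit_iff_isUnit_det _).1 hRunit
  have hRinvH : R⁻¹ * H₀ = R := by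
    rw [← hRR, ← Matrix.mul_assoc, Matrix.nonsing_inv_mul _ hRdet, Matrix.one_mul]
  have hHRinv : H₀ * R⁻¹ = R := by
    rw [← hRR, Matrix.mul_assoc, Matrix.mul_nonsing_inv _ hRdet, Matrix.mul_one]
  have hRHS : R⁻¹ * (H₀⁻¹ + S₀ᵀ * A⁻¹ * S₀)⁻¹ * R⁻¹
      = 1 - R * (S₀ᵀ * (Sig⁻¹ * (S₀ * R))) := by
    rw [hBinv]
    have h : R⁻¹ * (H₀ - H₀ * S₀ᵀ * Sig⁻¹ * S₀ * H₀) * R⁻¹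
        = R⁻¹ * H₀ * R⁻¹ - (R⁻¹ * H₀) * S₀ᵀ * Sig⁻¹ * S₀ * (H₀ * R⁻¹) := by
      simp only [Matrix.mul_sub, Matrix.sub_mul, Matrix.mul_assoc]
    rw [h, hRinvH, hHRinv, Matrix.mul_nonsing_inv _ hRdet]
    simp [Matrix.mul_assoc]
  rw [hRHS]
  have hVT : Vᵀ = Q * (S₁ᵀ * (Sig⁻¹ * (S₀ * R))) := by
    show (R * S₀ᵀ * Sig⁻¹ * S₁ * Q)ᵀ = _
    simp only [Matrix.transpose_mul, hQT, hRT, transpose_transpose, hSigInvT, Matrix.mul_assoc]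
  show (R * S₀ᵀ * Sig⁻¹ * S₀ * R - 1) * (R * S₀ᵀ * Sig⁻¹ * S₀ * R - 1)
      + (R * S₀ᵀ * Sig⁻¹ * S₁ * Q) * Vᵀ = _
  rw [hVT]
  simp only [Matrix.sub_mul, Matrix.mul_sub, Matrix.one_mul, Matrix.mul_one, Matrix.mul_assoc]
  rw [eS1 (Sig⁻¹ * (S₀ * R))]
  simp only [Matrix.mul_sub, Matrix.mul_inv_cancel_left_of_invertible]
  rw [eSH (Sig⁻¹ * (S₀ * R))]
  simp only [Matrix.mul_sub, Matrix.mul_inv_cancel_left_of_invertible]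
  have hRR' : ∀ X : Matrix (Fin k₁) (Fin k₁) ℝ, R * (R * X) = H₀ * X := by
    intro X; rw [← Matrix.mul_assoc, hRR]
  simp only [hRR']
  rw [eA (Sig⁻¹ * (S₀ * R))]
  simp only [Matrix.mul_sub, Matrix.mul_inv_cancel_left_of_invertible]
  abel
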